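/- Let C = C_1 × ... × C_m where each C_i is a nonempty finite subset of {1,...,n}, and let B ⊆ ℕ^n be the set of vectors ∑_{k=1}^m e_{j_k} with j_k ∈ C_k. Then B is the base set of a discrete polymatroid: for all v, w ∈ B, ∑_i v_i = ∑_i w_i, and whenever v_i > w_i there exists j with v_j < w_j and v + e_j − e_i ∈ B. -/

import Mathlib

open Finset

/-- The `j`-th standard basis vector of `ℕⁿ`. -/
def eVec {n : ℕ} (j : Fin n) : Fin n → ℕ := fun a => if a = j then 1 else 0

/-- The base set `B` of the transversal polymatroid associated with
`C₁,…,C_m ⊆ {1,…,n}`: all vectors `∑ₖ e_{jₖ}` with `jₖ ∈ Cₖ`. -/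
def transversalBase {m n : ℕ} (C : Fin m → Finset (Fin n)) : Set (Fin n → ℕ) :=
  { v | ∃ j : Fin m → Fin n, (∀ k, j k ∈ C k) ∧ v = ∑ k, eVec (j k) }

lemma eVec_self {n : ℕ} (x : Fin n) : eVec x x = 1 := by simp [eVec]

lemma eVec_ne {n : ℕ} {x a : Fin n} (h : a ≠ x) : eVec x a = 0 := by simp [eVec, h]

lemma sum_eVec_apply {m n : ℕ} (j : Fin m → Fin n) (a : Fin n) :
    (∑ k, eVec (j k)) a = (univ.filter fun k => j k = a).card := by
  rw [Finset.sum_apply, Finset.card_filter]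
  simp [eVec, eq_comm]

lemma swap_sum {m n : ℕ} (j : Fin m → Fin n) (k : Fin m) (l0 : Fin n) (a : Fin n) :
    (∑ t, eVec (Function.update j k l0 t)) a
      = (∑ t, eVec (j t)) a + eVec l0 a - eVec (j k) a := by
  rw [Finset.sum_apply, Finset.sum_apply,
    ← Finset.sum_erase_add _ _ (Finset.mem_univ k),
    ← Finset.sum_erase_add _ (fun t => eVec (j t) a) (Finset.mem_univ k)]
  have h1 : ∑ t ∈ univ.erase k, eVec (Function.update j k l0 t) a
      = ∑ t ∈ univ.erase k, eVec (j t) a := by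
    apply Finset.sum_congr rfl
    intro t ht
    rw [Function.update_of_ne (Finset.mem_erase.1 ht).1]
  rw [h1, Function.update_self]
  simp [eVec]
  split <;> split <;> omega

lemma key {m n : ℕ} (C : Fin m → Finset (Fin n)) :
    ∀ d (j j' : Fin m → Fin n), (univ.filter fun k => j k ≠ j' k).card ≤ d →
    (∀ k, j k ∈ C k) → (∀ k, j' k ∈ C k) → ∀ i : Fin n,
    (∑ k, eVec (j' k)) i < (∑ k, eVec (j k)) i →
    ∃ l, (∑ k, eVec (j k)) l < (∑ k, eVec (j' k)) l ∧
      (fun a => (∑ k, eVec (j k)) a + eVec l a - eVec i a) ∈ transversalBase C := by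
  intro d
  induction d with
  | zero =>
    intro j j' hcard hj hj' i hi
    have : j = j' := by
      funext k
      by_contra hk
      have : k ∈ univ.filter fun k => j k ≠ j' k := by simp [hk]
      have := Finset.card_pos.2 ⟨k, this⟩
      omega
    rw [this] at hi; omega
  | succ d ih =>
    intro j j' hcard hj hj' i hi
    -- find k with j k = i and j' k ≠ i
    have hex : ∃ k, j k = i ∧ j' k ≠ i := by
      by_contra h
      push_neg at h
      have hsub : (univ.filter fun k => j k = i) ⊆ (univ.filter fun k => j' k = i) := by
        intro k hk
        simp only [Finset.mem_filter, Finset.mem_univ, true_and] at hk ⊢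
        exact h k hk
      have := Finset.card_le_card hsub
      rw [sum_eVec_apply, sum_eVec_apply] at hi
      omega
    obtain ⟨k, hki, hk'⟩ := hex
    set l0 := j' k with hl0
    have hl0i : l0 ≠ i := hk'
    set j'' := Function.update j k l0 with hj''
    have hj''C : ∀ t, j'' t ∈ C t := by
      intro t
      rcases eq_or_ne t k with rfl | ht
      · rw [hj'', Function.update_self]; exact hj' t
      · rw [hj'', Function.update_of_ne ht]; exact hj t
    have hswap : ∀ a, (∑ t, eVec (j'' t)) a = (∑ t, eVec (j t)) a + eVec l0 a - eVec i a := by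
      intro a
      rw [hj'', swap_sum, hki]
    have hvi1 : 1 ≤ (∑ t, eVec (j t)) i := by omega
    rcases lt_or_ge ((∑ t, eVec (j t)) l0) ((∑ t, eVec (j' t)) l0) with hlt | hle
    · refine ⟨l0, hlt, j'', hj''C, ?_⟩
      funext a
      rw [hswap a]
    · -- recurse
      have hcard' : (univ.filter fun t => j'' t ≠ j' t).card ≤ d := by
        have hEq : (univ.filter fun t => j'' t ≠ j' t)
            = (univ.filter fun t => j t ≠ j' t).erase k := by
          ext t
          rcases eq_or_ne t k with rfl | ht
          · simp [hj'', Function.update_self, hl0]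
          · simp [hj'', Function.update_of_ne ht, ht]
        have hkmem : k ∈ univ.filter fun t => j t ≠ j' t := by
          simp [hki, Ne.symm hk']; exact Ne.symm hk'
        rw [hEq, Finset.card_erase_of_mem hkmem]
        omega
      have hl0lt : (∑ t, eVec (j' t)) l0 < (∑ t, eVec (j'' t)) l0 := by
        have := hswap l0
        rw [eVec_self, eVec_ne hl0i] at this
        omega
      obtain ⟨l, hl1, jw, hjwC, hjw⟩ := ih j'' j' hcard' hj''C hj' l0 hl0lt
      have hli : l ≠ i := by
        intro h
        subst h
        have := hswap l
        rw [eVec_self, eVec_ne (Ne.symm hl0i)] at this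
        omega
      have hll0 : l ≠ l0 := by
        intro h; subst h; omega
      refine ⟨l, ?_, jw, hjwC, ?_⟩
      · have := hswap l
        rw [eVec_ne hll0, eVec_ne hli] at this
        omega
      · rw [← hjw]
        funext a
        show _ = (∑ k, eVec (j'' k)) a + eVec l a - eVec l0 a
        rw [hswap a]
        have h := hswap a
        rcases eq_or_ne a i with rfl | hai
        · rw [eVec_self, eVec_ne (Ne.symm hl0i), eVec_ne (Ne.symm hli)]
          omega
        · rcases eq_or_ne a l0 with rfl | hal
          · rw [eVec_self, eVec_ne hl0i, eVec_ne (Ne.symm hll0)]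
            omega
          · rw [eVec_ne hai, eVec_ne hal]
            omega

/-- the set `B` of vectors `∑ₖ e_{jₖ}`, `jₖ ∈ Cₖ`, is the base
set of a discrete polymatroid: all elements have the same coordinate sum, and
for `v, w ∈ B` and `i` with `vᵢ > wᵢ` there is `l` with `v_l < w_l` and
`v + e_l − e_i ∈ B`. -/
theorem stmt14 {m n : ℕ} (C : Fin m → Finset (Fin n))
    (hC : ∀ k, (C k).Nonempty) (v w : Fin n → ℕ)
    (hv : v ∈ transversalBase C) (hw : w ∈ transversalBase C) :
    (∑ a, v a = ∑ a, w a) ∧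
    ∀ i, w i < v i → ∃ l, v l < w l ∧
      (fun a => v a + eVec l a - eVec i a) ∈ transversalBase C := by
  obtain ⟨j, hj, rfl⟩ := hv
  obtain ⟨j', hj', rfl⟩ := hw
  have hone : ∀ x : Fin n, ∑ a, eVec x a = 1 := by
    intro x
    simp [eVec, Finset.sum_ite_eq']
  have hm : ∀ jf : Fin m → Fin n, ∑ a, (∑ k, eVec (jf k)) a = m := by
    intro jf
    have : ∀ a : Fin n, (∑ k, eVec (jf k)) a = ∑ k, eVec (jf k) a := fun a =>
      Finset.sum_apply a univ _
    simp only [this]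
    rw [Finset.sum_comm]
    simp [hone]
  constructor
  · rw [hm j, hm j']
  · intro i hi
    exact key C m j j' ((Finset.card_filter_le _ _).trans (by simp)) hj hj' i hi
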